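/- Let α be irrational with continued fraction denominators q_n, let θ be as in the paper's construction, and let k_j, n = 2j−1 be as above with η q_{n+1} ≥ 10¹⁷ q_n. Consider the two intervals of integers I₁ = [−s q_{n−n₀}, s q_{n−n₀} − 1] and I₂ = [ℓq_n + k_j − s q_{n−n₀}, ℓq_n + k_j + s q_{n−n₀} − 1] with s q_{n−n₀} ≤ k_j/2 − 2εq_n and |ℓ| ≤ 20 b_{n+1}/q_n where b_{n+1} = 10⁻⁷ η q_{n+1}. Then for any distinct j₁, j₂ ∈ I₁ ∪ I₂ one can write j₁ − j₂ = l₁ q_n + l₂ with 1 ≤ l₂ < q_n and |l₁| ≤ 40 b_{n+1}/q_n + 4, and hence ‖(j₁ − j₂)α‖_{ℝ/ℤ} ≥ 1/(4 q_n). -/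

import Mathlib

/-- Distance from a real number to the nearest integer, ‖x‖_{ℝ/ℤ}. -/
noncomputable def normZ (x : ℝ) : ℝ := |x - round x|

/-- The Gauss map. -/
noncomputable def cfGauss (x : ℝ) : ℝ := Int.fract x⁻¹

/-- Partial quotients of α ∈ (0,1): `cfA α n` is the paper's a_{n+1}. -/
noncomputable def cfA (α : ℝ) (n : ℕ) : ℤ := ⌊(cfGauss^[n] α)⁻¹⌋

/-- Continued fraction denominators: q_0 = 1, q_1 = a_1, q_{n+2} = a_{n+2} q_{n+1} + q_n. -/
noncomputable def cfQ (α : ℝ) : ℕ → ℤ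
  | 0 => 1
  | 1 => cfA α 0
  | (n + 2) => cfA α (n + 1) * cfQ α (n + 1) + cfQ α n

/-- Continued fraction numerators: p_0 = 0, p_1 = 1, p_{n+2} = a_{n+2} p_{n+1} + p_n. -/
noncomputable def cfP (α : ℝ) : ℕ → ℤ
  | 0 => 0
  | 1 => 1
  | (n + 2) => cfA α (n + 1) * cfP α (n + 1) + cfP α n

lemma gauss_iter (α : ℝ) (hα : Irrational α) (h0 : 0 < α) (h1 : α < 1) :
    ∀ k, Irrational (cfGauss^[k] α) ∧ 0 < cfGauss^[k] α ∧ cfGauss^[k] α < 1 := by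
  intro k
  induction k with
  | zero => exact ⟨hα, h0, h1⟩
  | succ k ih =>
    obtain ⟨hi, hp, hl⟩ := ih
    rw [Function.iterate_succ_apply']
    have hirr : Irrational (cfGauss (cfGauss^[k] α)) := by
      unfold cfGauss
      rw [Int.fract]
      exact hi.inv.sub_intCast _
    refine ⟨hirr, ?_, Int.fract_lt_one _⟩
    rcases (Int.fract_nonneg ((cfGauss^[k] α)⁻¹)).lt_or_eq with h | h
    · exact h
    · exact absurd (show cfGauss (cfGauss^[k] α) = 0 from h.symm) hirr.ne_zero

lemma cfA_ge_one (α : ℝ) (hα : Irrational α) (h0 : 0 < α) (h1 : α < 1) (k : ℕ) :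
    1 ≤ cfA α k := by
  obtain ⟨_, hp, hl⟩ := gauss_iter α hα h0 h1 k
  have h2 : 1 < (cfGauss^[k] α)⁻¹ := one_lt_inv₀ hp |>.mpr hl
  exact Int.le_floor.mpr (by exact_mod_cast h2.le)

lemma cfQ_ge_one (α : ℝ) (hα : Irrational α) (h0 : 0 < α) (h1 : α < 1) :
    ∀ m, 1 ≤ cfQ α m := by
  have hA := cfA_ge_one α hα h0 h1
  intro m
  induction m using Nat.twoStepInduction with
  | zero => simp [cfQ]
  | one => simpa [cfQ] using hA 0
  | more m ih1 ih2 =>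
    have h := hA (m + 1)
    show 1 ≤ cfA α (m + 1) * cfQ α (m + 1) + cfQ α m
    nlinarith

/-- decomposition and small-divisor bound for differences of points in I₁ ∪ I₂. -/
theorem stmt15 (α η ε : ℝ) (hα : Irrational α) (h0 : 0 < α) (h1 : α < 1)
    (hη0 : 0 < η) (hη1 : η ≤ 1 / 100) (hε : 0 < ε)
    (j n : ℕ) (hn : n = 2 * j - 1) (hj : 1 ≤ j)
    (kj : ℤ) (hkj0 : 0 < kj) (hkj : (kj : ℝ) ≤ 2 * η * (cfQ α n : ℝ))
    (n₀ : ℕ) (hn₀ : n₀ ≤ n) (s : ℤ) (hs : 1 ≤ s)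
    (hs2 : 2 * (s : ℝ) * (cfQ α (n - n₀) : ℝ) ≤ (kj : ℝ) / 2 - 2 * ε * (cfQ α n : ℝ))
    (ℓ : ℤ)
    (hℓ : |(ℓ : ℝ)| ≤ 20 * ((1 / 10 ^ 7) * η * (cfQ α (n + 1) : ℝ)) / (cfQ α n : ℝ))
    (hgap : 10 ^ 17 * (cfQ α n : ℝ) ≤ η * (cfQ α (n + 1) : ℝ))
    (hprop5 : ∀ l₁ l₂ : ℤ, |(l₁ : ℝ)| ≤ (cfQ α (n + 1) : ℝ) / (10 * (cfQ α n : ℝ)) →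
      1 ≤ l₂ → l₂ < cfQ α n →
      1 / (4 * (cfQ α n : ℝ)) ≤ normZ (((l₁ * cfQ α n + l₂ : ℤ) : ℝ) * α)) :
    ∀ j₁ j₂ : ℤ,
      j₁ ∈ Set.Icc (-(s * cfQ α (n - n₀))) (s * cfQ α (n - n₀) - 1)
          ∪ Set.Icc (ℓ * cfQ α n + kj - s * cfQ α (n - n₀))
              (ℓ * cfQ α n + kj + s * cfQ α (n - n₀) - 1) →
      j₂ ∈ Set.Icc (-(s * cfQ α (n - n₀))) (s * cfQ α (n - n₀) - 1)
          ∪ Set.Icc (ℓ * cfQ α n + kj - s * cfQ α (n - n₀))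
              (ℓ * cfQ α n + kj + s * cfQ α (n - n₀) - 1) →
      j₁ ≠ j₂ →
      ∃ l₁ l₂ : ℤ, j₁ - j₂ = l₁ * cfQ α n + l₂ ∧ 1 ≤ l₂ ∧ l₂ < cfQ α n
        ∧ |(l₁ : ℝ)| ≤ 40 * ((1 / 10 ^ 7) * η * (cfQ α (n + 1) : ℝ)) / (cfQ α n : ℝ) + 4
        ∧ 1 / (4 * (cfQ α n : ℝ)) ≤ normZ (((j₁ - j₂ : ℤ) : ℝ) * α) := by
  intro j₁ j₂ hm1 hm2 hne
  have hQ1 : (1 : ℤ) ≤ cfQ α n := cfQ_ge_one α hα h0 h1 n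
  have hQ'1 : (1 : ℤ) ≤ cfQ α (n - n₀) := cfQ_ge_one α hα h0 h1 _
  have hQ11 : (1 : ℤ) ≤ cfQ α (n + 1) := cfQ_ge_one α hα h0 h1 _
  have hQr : (1 : ℝ) ≤ (cfQ α n : ℝ) := by exact_mod_cast hQ1
  have hQ1r : (1 : ℝ) ≤ (cfQ α (n + 1) : ℝ) := by exact_mod_cast hQ11
  have hQpos : (0 : ℝ) < (cfQ α n : ℝ) := by linarith
  have hkjr : (0 : ℝ) < (kj : ℝ) := by exact_mod_cast hkj0
  set Q : ℤ := cfQ α n with hQdef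
  set S : ℤ := s * cfQ α (n - n₀) with hSdef
  have hSr : 2 * (S : ℝ) ≤ (kj : ℝ) / 2 := by
    have hcast : (S : ℝ) = (s : ℝ) * (cfQ α (n - n₀) : ℝ) := by rw [hSdef]; push_cast; ring
    nlinarith [hs2, hε.le, hQpos]
  have hkQ : (kj : ℝ) ≤ (Q : ℝ) / 50 := by nlinarith [hkj, hη1, hQpos]
  have h2SQ : 2 * S < Q := by
    have : ((2 * S : ℤ) : ℝ) < (Q : ℝ) := by push_cast; linarith
    exact_mod_cast this
  have hkSQ : kj + 2 * S < Q := by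
    have : ((kj + 2 * S : ℤ) : ℝ) < (Q : ℝ) := by push_cast; linarith
    exact_mod_cast this
  have hkS : 2 * S < kj := by
    have : ((2 * S : ℤ) : ℝ) < (kj : ℝ) := by push_cast; linarith
    exact_mod_cast this
  have habs0 : (0 : ℤ) ≤ |ℓ| := abs_nonneg ℓ
  have habsneg : |(-ℓ - 1 : ℤ)| ≤ |ℓ| + 1 := by
    have h := abs_add_le ℓ 1
    have he : (-ℓ - 1 : ℤ) = -(ℓ + 1) := by ring
    rw [he, abs_neg]
    simpa using h
  clear_value S Q
  clear hQdef hSdef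
  have key : ∃ m t : ℤ, j₁ - j₂ = m * Q + t ∧ 1 ≤ t ∧ t < Q ∧ |m| ≤ |ℓ| + 1 := by
    rcases hm1 with h1' | h1' <;> rcases hm2 with h2' | h2' <;>
      simp only [Set.mem_Icc] at h1' h2'
    · rcases hne.lt_or_gt with h | h
      · exact ⟨-1, j₁ - j₂ + Q, by ring, by omega, by omega,
          by rw [abs_neg, abs_one]; linarith⟩
      · exact ⟨0, j₁ - j₂, by ring, by omega, by omega, by rw [abs_zero]; linarith⟩
    · exact ⟨-ℓ - 1, j₁ - j₂ + ℓ * Q + Q, by ring, by omega, by omega, habsneg⟩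
    · exact ⟨ℓ, j₁ - j₂ - ℓ * Q, by ring, by omega, by omega, by linarith⟩
    · rcases hne.lt_or_gt with h | h
      · exact ⟨-1, j₁ - j₂ + Q, by ring, by omega, by omega,
          by rw [abs_neg, abs_one]; linarith⟩
      · exact ⟨0, j₁ - j₂, by ring, by omega, by omega, by rw [abs_zero]; linarith⟩
  obtain ⟨m, t, heq, ht1, ht2, hmabs⟩ := key
  have hmr : |(m : ℝ)| ≤ |(ℓ : ℝ)| + 1 := by
    have h : ((|m| : ℤ) : ℝ) ≤ ((|ℓ| + 1 : ℤ) : ℝ) := by exact_mod_cast hmabs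
    push_cast at h
    exact h
  have hb0 : (0 : ℝ) ≤ 20 * ((1 / 10 ^ 7) * η * (cfQ α (n + 1) : ℝ)) / (Q : ℝ) := by
    positivity
  have habs4 : |(m : ℝ)| ≤ 40 * ((1 / 10 ^ 7) * η * (cfQ α (n + 1) : ℝ)) / (Q : ℝ) + 4 := by
    have h4 : 40 * ((1 / 10 ^ 7) * η * (cfQ α (n + 1) : ℝ)) / (Q : ℝ)
        = 2 * (20 * ((1 / 10 ^ 7) * η * (cfQ α (n + 1) : ℝ)) / (Q : ℝ)) := by ring
    rw [h4]; linarith [hℓ, hmr, hb0]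
  have hηQ : η * (cfQ α (n + 1) : ℝ) ≤ (cfQ α (n + 1) : ℝ) / 100 := by nlinarith
  have hℓ' : |(ℓ : ℝ)| * (Q : ℝ) ≤ 20 * ((1 / 10 ^ 7) * η * (cfQ α (n + 1) : ℝ)) :=
    (le_div_iff₀ hQpos).mp hℓ
  have hmQ : |(m : ℝ)| ≤ (cfQ α (n + 1) : ℝ) / (10 * (Q : ℝ)) := by
    rw [le_div_iff₀ (by positivity)]
    have h1 := mul_le_mul_of_nonneg_right hmr hQpos.le
    linarith [h1, hℓ', hηQ, hgap, hQr]
  have hnorm := hprop5 m t hmQ ht1 ht2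
  refine ⟨m, t, heq, ht1, ht2, habs4, ?_⟩
  rw [heq]
  exact hnorm
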